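/- Let V = {1,…,n} be partitioned into communities B_1,…,B_K with |B_i| = n_i, let q_{i;1}, q_{i;2} ∈ (0,1) for each i, and let P denote the one-step transition probability function of the block edgelighter walk, restricted to the set of states in which the number of on pairs between B_i and B_j equals a fixed value m_{ij} for every pair of distinct communities i ≠ j. Define w((B_i, u, c)) = (1/K)·(1/n_i)·∏_j q_{j;2}^{m_{j,c}}·q_{j;1}^{r_{j,c}}·∏_{i<j} 1/binom(n_i·n_j, m_{ij}), where m_{j,c} (resp. r_{j,c}) is the number of pairs of vertices within B_j with status 1 (resp. status 0) in c. Then the block edgelighter walk satisfies detailed balance with respect to w: for all states x, y in the restricted state space, w(x)·P(x,y) = w(y)·P(y,x); hence the chain is reversible with respect to the probability distribution proportional to w. -/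
import Mathlib


open scoped BigOperators
open scoped Classical
open Finset Matrix

/-- Unordered pairs of distinct vertices. -/
abbrev EPair (n : ℕ) := {e : Sym2 (Fin n) // ¬ e.IsDiag}

/-- An on/off configuration on the pairs of distinct vertices. -/
abbrev EConfig (n : ℕ) := EPair n → Bool

/-- State of the standard edgelighter walk: walker position and configuration. -/
abbrev EState (n : ℕ) := Fin n × EConfig n

def mkEPair {n : ℕ} (u v : Fin n) (h : u ≠ v) : EPair n :=
  ⟨s(u, v), by simpa using h⟩

def flipAt {n : ℕ} (c : EConfig n) (e : EPair n) : EConfig n :=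
  Function.update c e (! c e)

/-- One-step transition probabilities of the standard edgelighter walk with
parameters `q1 q2` on `n` vertices. -/
noncomputable def elStep (n : ℕ) (q1 q2 : ℝ) : EState n → EState n → ℝ := fun x y =>
  if hvu : y.1 = x.1 then (if y.2 = x.2 then 1 / (n : ℝ) else 0)
  else
    let e : EPair n := mkEPair x.1 y.1 (Ne.symm hvu)
    let q : ℝ := if x.2 e then q1 else q2
    if y.2 = x.2 then (1 - q) / (n : ℝ)
    else if y.2 = flipAt x.2 e then q / (n : ℝ)
    else 0

/-- `t`-step transition probabilities of a kernel on a finite state space. -/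
noncomputable def kPow {S : Type*} [Fintype S] (P : S → S → ℝ) : ℕ → S → S → ℝ
  | 0 => fun x y => if x = y then 1 else 0
  | (t + 1) => fun x y => ∑ z : S, kPow P t x z * P z y

/-- Total variation distance between two distributions on a finite space. -/
noncomputable def tvDist {S : Type*} [Fintype S] (μ ν : S → ℝ) : ℝ :=
  (∑ x : S, |μ x - ν x|) / 2

def onCount {n : ℕ} (c : EConfig n) : ℕ := (Finset.univ.filter fun e => c e = true).card

def offCount {n : ℕ} (c : EConfig n) : ℕ := (Finset.univ.filter fun e => c e = false).card

noncomputable def elWeight {n : ℕ} (q1 q2 : ℝ) (x : EState n) : ℝ :=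
  q2 ^ onCount x.2 * q1 ^ offCount x.2

/-- The stationary distribution `π°` of the standard edgelighter walk,
`π°((u,c)) ∝ (1/n) q2^{#on(c)} q1^{#off(c)}`. -/
noncomputable def elStat (n : ℕ) (q1 q2 : ℝ) (x : EState n) : ℝ :=
  ((1 / (n : ℝ)) * elWeight q1 q2 x) / ∑ y : EState n, (1 / (n : ℝ)) * elWeight q1 q2 y

/-- Total variation mixing time of the standard edgelighter walk. -/
noncomputable def elMixingTime (n : ℕ) (q1 q2 : ℝ) : ℕ :=
  sInf {t : ℕ | ∀ x : EState n,
    tvDist (kPow (elStep n q1 q2) t x) (elStat n q1 q2) < 1 / 4}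

/-- The walker path determined by the start `l0` and `t` subsequent choices. -/
def walkSeq {n : ℕ} (t : ℕ) (l0 : Fin n) (f : Fin t → Fin n) : ℕ → Fin n :=
  fun i => if h : 0 < i ∧ i ≤ t then f ⟨i - 1, by omega⟩ else l0

/-- Probability, for the walk started at `l0` (each step uniform on the vertices),
that some unordered pair of distinct vertices has not been traversed within the
first `t` steps. -/
noncomputable def coverSurvival (n t : ℕ) (l0 : Fin n) : ℝ :=
  ((Finset.univ.filter fun f : Fin t → Fin n =>
      ∃ u v : Fin n, u ≠ v ∧ ∀ ℓ < t,
        s(walkSeq t l0 f ℓ, walkSeq t l0 f (ℓ + 1)) ≠ s(u, v)).card : ℝ) / (n : ℝ) ^ t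

/-- Expected cover time `E_{l0}[τ⁽ᵘ⁾_cover]`, via `E[τ] = ∑_{t ≥ 0} P(τ > t)`. -/
noncomputable def expCoverTime (n : ℕ) (l0 : Fin n) : ℝ := ∑' t : ℕ, coverSurvival n t l0

/-- `t⁽ᵘ⁾_cover`: maximum over starting states of the expected cover time. -/
noncomputable def maxExpCoverTime (n : ℕ) : ℝ := ⨆ l0 : Fin n, expCoverTime n l0
/-- Adjacency matrix of a configuration. -/
noncomputable def adjOf {n : ℕ} (c : EConfig n) : Matrix (Fin n) (Fin n) ℝ :=
  Matrix.of fun i j => if h : i = j then 0 else if c (mkEPair i j h) then 1 else 0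

/-- Permutation matrix of a permutation. -/
noncomputable def permMat {n : ℕ} (σ : Equiv.Perm (Fin n)) : Matrix (Fin n) (Fin n) ℝ :=
  Matrix.of fun i j => if σ i = j then 1 else 0

/-- Graph matching objective `Tr(A P B Pᵀ)`. -/
noncomputable def gmObj {n : ℕ} (c0 ct : EConfig n) (σ : Equiv.Perm (Fin n)) : ℝ :=
  Matrix.trace (adjOf c0 * permMat σ * adjOf ct * (permMat σ)ᵀ)

/-- Number of non-fixed points of a permutation. -/
def nonfixed {n : ℕ} (σ : Equiv.Perm (Fin n)) : ℕ :=
  (Finset.univ.filter fun i => σ i ≠ i).card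

/-- ER(n,p) probability of a given configuration. -/
noncomputable def erWeight (n : ℕ) (p : ℝ) (c : EConfig n) : ℝ :=
  p ^ onCount c * (1 - p) ^ offCount c
/-- Joint probability that the initial configuration (drawn from ER(n,p)) is `c0` and the
configuration after `t` steps of the standard edgelighter walk (with the initial walker
position uniform on the vertices, independent of the graph) is `ct`. -/
noncomputable def elJoint (n : ℕ) (p q1 q2 : ℝ) (t : ℕ) (c0 ct : EConfig n) : ℝ :=
  erWeight n p c0 *
    ∑ u : Fin n, (1 / (n : ℝ)) *
      ∑ v : Fin n, kPow (elStep n q1 q2) t (u, c0) (v, ct)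

/-- Probability that the pair `{u,v}` has not been traversed by the walker within the
first `t` steps, for the walk whose initial position is uniform on the vertices. -/
noncomputable def travProb (n t : ℕ) (u v : Fin n) : ℝ :=
  ((Finset.univ.filter fun g : Fin n × (Fin t → Fin n) =>
      ∀ ℓ < t, s(walkSeq t g.1 g.2 ℓ, walkSeq t g.1 g.2 (ℓ + 1)) ≠ s(u, v)).card : ℝ)
    / (n : ℝ) ^ (t + 1)
/-- State of the block edgelighter walk: community label, walker position, configuration. -/
abbrev BState (n K : ℕ) := Fin K × Fin n × EConfig n

/-- Size of community `i` under the community assignment `τ`. -/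
def commCard {n K : ℕ} (τ : Fin n → Fin K) (i : Fin K) : ℕ :=
  (Finset.univ.filter fun u => τ u = i).card

/-- Number of 'on' pairs between communities `i` and `j`. -/
def crossOn {n K : ℕ} (τ : Fin n → Fin K) (c : EConfig n) (i j : Fin K) : ℕ :=
  (Finset.univ.filter fun e : EPair n => c e = true ∧ Sym2.map τ e.1 = s(i, j)).card

/-- Number of 'off' pairs between communities `i` and `j`. -/
def crossOff {n K : ℕ} (τ : Fin n → Fin K) (c : EConfig n) (i j : Fin K) : ℕ :=
  (Finset.univ.filter fun e : EPair n => c e = false ∧ Sym2.map τ e.1 = s(i, j)).card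

/-- Number of 'on' pairs within community `j`. -/
def onIn {n K : ℕ} (τ : Fin n → Fin K) (j : Fin K) (c : EConfig n) : ℕ := crossOn τ c j j

/-- Number of 'off' pairs within community `j`. -/
def offIn {n K : ℕ} (τ : Fin n → Fin K) (j : Fin K) (c : EConfig n) : ℕ := crossOff τ c j j

/-- One-step transition probabilities of the block edgelighter walk. -/
noncomputable def blStep {n K : ℕ} (τ : Fin n → Fin K) (q1 q2 : Fin K → ℝ) :
    BState n K → BState n K → ℝ := fun x y =>
  if τ y.2.1 ≠ y.1 then 0
  else if y.1 = x.1 then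
    (if hvu : y.2.1 = x.2.1 then
      (if y.2.2 = x.2.2 then 1 / (2 * (commCard τ x.1 : ℝ)) else 0)
     else
      let e : EPair n := mkEPair x.2.1 y.2.1 (Ne.symm hvu)
      let q : ℝ := if x.2.2 e then q1 x.1 else q2 x.1
      if y.2.2 = x.2.2 then (1 - q) / (2 * (commCard τ x.1 : ℝ))
      else if y.2.2 = flipAt x.2.2 e then q / (2 * (commCard τ x.1 : ℝ))
      else 0)
  else
    if ∃ e1 e2 : EPair n, x.2.2 e1 = true ∧ x.2.2 e2 = false ∧
        Sym2.map τ e1.1 = s(x.1, y.1) ∧ Sym2.map τ e2.1 = s(x.1, y.1) ∧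
        y.2.2 = flipAt (flipAt x.2.2 e1) e2
    then 1 / (2 * ((K : ℝ) - 1) * (commCard τ y.1 : ℝ) *
          (crossOn τ x.2.2 x.1 y.1 : ℝ) * (crossOff τ x.2.2 x.1 y.1 : ℝ))
    else 0

/-- Probability of a configuration under the SBM with connection matrix `Λ`
(symmetrized) and community assignment `τ`. -/
noncomputable def pairProb {n K : ℕ} (Λ : Fin K → Fin K → ℝ) (τ : Fin n → Fin K)
    (e : EPair n) : ℝ :=
  Sym2.lift ⟨fun a b => (Λ (τ a) (τ b) + Λ (τ b) (τ a)) / 2, fun a b => by ring⟩ e.1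

noncomputable def sbmWeight {n K : ℕ} (Λ : Fin K → Fin K → ℝ) (τ : Fin n → Fin K)
    (c : EConfig n) : ℝ :=
  ∏ e : EPair n, (if c e then pairProb Λ τ e else 1 - pairProb Λ τ e)

/-- Joint probability of the initial configuration (drawn from the SBM) and
the configuration after `t` steps of the block edgelighter walk, with the initial
walker position uniform on the vertices. -/
noncomputable def blJoint (n K : ℕ) (Λ : Fin K → Fin K → ℝ) (τ : Fin n → Fin K)
    (q1 q2 : Fin K → ℝ) (t : ℕ) (c0 ct : EConfig n) : ℝ :=
  sbmWeight Λ τ c0 *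
    ∑ u : Fin n, (1 / (n : ℝ)) *
      ∑ j : Fin K, ∑ v : Fin n, kPow (blStep τ q1 q2) t (τ u, u, c0) (j, v, ct)

/-- The restricted state space: the walker is in the community given by the label,
and the number of 'on' pairs between any two distinct communities is prescribed. -/
abbrev BValid (n K : ℕ) (τ : Fin n → Fin K) (m : Fin K → Fin K → ℕ) :=
  {x : BState n K // τ x.2.1 = x.1 ∧ ∀ i j : Fin K, i ≠ j → crossOn τ x.2.2 i j = m i j}

/-- The reversing weight of the block edgelighter walk. -/
noncomputable def blWeight {n K : ℕ} (τ : Fin n → Fin K) (q1 q2 : Fin K → ℝ)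
    (m : Fin K → Fin K → ℕ) (x : BState n K) : ℝ :=
  (1 / (K : ℝ)) * (1 / (commCard τ x.1 : ℝ)) *
    (∏ j : Fin K, (q2 j) ^ onIn τ j x.2.2 * (q1 j) ^ offIn τ j x.2.2) *
    ∏ pr ∈ Finset.univ.filter (fun pr : Fin K × Fin K => pr.1 < pr.2),
      (1 : ℝ) / ((commCard τ pr.1 * commCard τ pr.2).choose (m pr.1 pr.2) : ℝ)

/-- Stationary distribution of the restricted block edgelighter walk. -/
noncomputable def blStatR (n K : ℕ) (τ : Fin n → Fin K) (q1 q2 : Fin K → ℝ)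
    (m : Fin K → Fin K → ℕ) (x : BValid n K τ m) : ℝ :=
  blWeight τ q1 q2 m x.1 / ∑ y : BValid n K τ m, blWeight τ q1 q2 m y.1

/-- Total variation mixing time of the block edgelighter walk on the restricted
state space. -/
noncomputable def blMixingTime (n K : ℕ) (τ : Fin n → Fin K) (q1 q2 : Fin K → ℝ)
    (m : Fin K → Fin K → ℕ) : ℕ :=
  sInf {t : ℕ | ∀ x : BValid n K τ m,
    tvDist (kPow (fun a b : BValid n K τ m => blStep τ q1 q2 a.1 b.1) t x)
      (blStatR n K τ q1 q2 m) < 1 / 4}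

section DBhelpers
variable {n K : ℕ}

lemma mkEPair_symm (u v : Fin n) (h : u ≠ v) : mkEPair u v h = mkEPair v u h.symm := by
  simp [mkEPair, Sym2.eq_swap]

lemma flipAt_apply_self (c : EConfig n) (e : EPair n) : flipAt c e e = ! c e := by
  simp [flipAt]

lemma flipAt_apply_ne (c : EConfig n) (e e' : EPair n) (h : e' ≠ e) : flipAt c e e' = c e' := by
  simp [flipAt, Function.update_of_ne h]

lemma flipAt_flipAt (c : EConfig n) (e : EPair n) : flipAt (flipAt c e) e = c := by
  funext e'
  by_cases h : e' = e
  · subst h; simp [flipAt]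
  · simp [flipAt, Function.update_of_ne h]

lemma flipAt_comm (c : EConfig n) (e1 e2 : EPair n) (h : e1 ≠ e2) :
    flipAt (flipAt c e1) e2 = flipAt (flipAt c e2) e1 := by
  unfold flipAt
  rw [Function.update_of_ne h.symm, Function.update_of_ne h, Function.update_comm h]

lemma crossOn_flip_ne (τ : Fin n → Fin K) (c : EConfig n) (e : EPair n)
    (i j : Fin K) (h : Sym2.map τ e.1 ≠ s(i, j)) :
    crossOn τ (flipAt c e) i j = crossOn τ c i j := by
  unfold crossOn
  congr 1
  ext e'
  simp only [mem_filter, mem_univ, true_and]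
  by_cases he : e' = e
  · subst he; simp [h]
  · rw [flipAt_apply_ne _ _ _ he]

lemma crossOff_flip_ne (τ : Fin n → Fin K) (c : EConfig n) (e : EPair n)
    (i j : Fin K) (h : Sym2.map τ e.1 ≠ s(i, j)) :
    crossOff τ (flipAt c e) i j = crossOff τ c i j := by
  unfold crossOff
  congr 1
  ext e'
  simp only [mem_filter, mem_univ, true_and]
  by_cases he : e' = e
  · subst he; simp [h]
  · rw [flipAt_apply_ne _ _ _ he]

lemma crossOn_flip_true (τ : Fin n → Fin K) (c : EConfig n) (e : EPair n)
    (i j : Fin K) (hc : c e = true) (he : Sym2.map τ e.1 = s(i, j)) :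
    crossOn τ (flipAt c e) i j + 1 = crossOn τ c i j := by
  unfold crossOn
  have hset : (univ.filter fun e' : EPair n => flipAt c e e' = true ∧ Sym2.map τ e'.1 = s(i, j))
      = (univ.filter fun e' : EPair n => c e' = true ∧ Sym2.map τ e'.1 = s(i, j)).erase e := by
    ext e'
    simp only [mem_erase, mem_filter, mem_univ, true_and]
    by_cases h' : e' = e
    · subst h'; simp [flipAt_apply_self, hc, he]
    · rw [flipAt_apply_ne _ _ _ h']; tauto
  rw [hset, Finset.card_erase_of_mem (by simp only [mem_filter, mem_univ, true_and]; exact ⟨hc, he⟩)]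
  have : 0 < (univ.filter fun e' : EPair n => c e' = true ∧ Sym2.map τ e'.1 = s(i, j)).card :=
    Finset.card_pos.mpr ⟨e, by simp only [mem_filter, mem_univ, true_and]; exact ⟨hc, he⟩⟩
  omega

lemma crossOff_flip_true (τ : Fin n → Fin K) (c : EConfig n) (e : EPair n)
    (i j : Fin K) (hc : c e = true) (he : Sym2.map τ e.1 = s(i, j)) :
    crossOff τ (flipAt c e) i j = crossOff τ c i j + 1 := by
  unfold crossOff
  have hset : (univ.filter fun e' : EPair n => flipAt c e e' = false ∧ Sym2.map τ e'.1 = s(i, j))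
      = insert e (univ.filter fun e' : EPair n => c e' = false ∧ Sym2.map τ e'.1 = s(i, j)) := by
    ext e'
    simp only [mem_insert, mem_filter, mem_univ, true_and]
    by_cases h' : e' = e
    · subst h'; simp [flipAt_apply_self, hc, he]
    · rw [flipAt_apply_ne _ _ _ h']; tauto
  rw [hset, Finset.card_insert_of_notMem (by simp [hc])]

lemma crossOn_flip_false (τ : Fin n → Fin K) (c : EConfig n) (e : EPair n)
    (i j : Fin K) (hc : c e = false) (he : Sym2.map τ e.1 = s(i, j)) :
    crossOn τ (flipAt c e) i j = crossOn τ c i j + 1 := by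
  unfold crossOn
  have hset : (univ.filter fun e' : EPair n => flipAt c e e' = true ∧ Sym2.map τ e'.1 = s(i, j))
      = insert e (univ.filter fun e' : EPair n => c e' = true ∧ Sym2.map τ e'.1 = s(i, j)) := by
    ext e'
    simp only [mem_insert, mem_filter, mem_univ, true_and]
    by_cases h' : e' = e
    · subst h'; simp [flipAt_apply_self, hc, he]
    · rw [flipAt_apply_ne _ _ _ h']; tauto
  rw [hset, Finset.card_insert_of_notMem (by simp [hc])]

lemma crossOff_flip_false (τ : Fin n → Fin K) (c : EConfig n) (e : EPair n)
    (i j : Fin K) (hc : c e = false) (he : Sym2.map τ e.1 = s(i, j)) :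
    crossOff τ (flipAt c e) i j + 1 = crossOff τ c i j := by
  unfold crossOff
  have hset : (univ.filter fun e' : EPair n => flipAt c e e' = false ∧ Sym2.map τ e'.1 = s(i, j))
      = (univ.filter fun e' : EPair n => c e' = false ∧ Sym2.map τ e'.1 = s(i, j)).erase e := by
    ext e'
    simp only [mem_erase, mem_filter, mem_univ, true_and]
    by_cases h' : e' = e
    · subst h'; simp [flipAt_apply_self, hc, he]
    · rw [flipAt_apply_ne _ _ _ h']; tauto
  rw [hset, Finset.card_erase_of_mem (by simp only [mem_filter, mem_univ, true_and]; exact ⟨hc, he⟩)]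
  have : 0 < (univ.filter fun e' : EPair n => c e' = false ∧ Sym2.map τ e'.1 = s(i, j)).card :=
    Finset.card_pos.mpr ⟨e, by simp only [mem_filter, mem_univ, true_and]; exact ⟨hc, he⟩⟩
  omega

lemma crossOn_symm (τ : Fin n → Fin K) (c : EConfig n) (i j : Fin K) :
    crossOn τ c i j = crossOn τ c j i := by
  unfold crossOn
  rw [show s(i, j) = s(j, i) from Sym2.eq_swap]

lemma crossOn_add_crossOff (τ : Fin n → Fin K) (c : EConfig n) (i j : Fin K) :
    crossOn τ c i j + crossOff τ c i j =
      (univ.filter fun e : EPair n => Sym2.map τ e.1 = s(i, j)).card := by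
  unfold crossOn crossOff
  rw [show (univ.filter fun e : EPair n => c e = true ∧ Sym2.map τ e.1 = s(i, j)) =
      (univ.filter fun e : EPair n => Sym2.map τ e.1 = s(i, j)).filter (fun e => c e = true) by
    rw [Finset.filter_filter]; simp [and_comm]]
  rw [show (univ.filter fun e : EPair n => c e = false ∧ Sym2.map τ e.1 = s(i, j)) =
      (univ.filter fun e : EPair n => Sym2.map τ e.1 = s(i, j)).filter (fun e => ¬ (c e = true)) by
    rw [Finset.filter_filter]; simp [and_comm]]
  exact Finset.card_filter_add_card_filter_not _

end DBhelpers

section DBhelpers2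
variable {n K : ℕ}

lemma weight_flip (τ : Fin n → Fin K) (q1 q2 : Fin K → ℝ) (m : Fin K → Fin K → ℕ)
    (i : Fin K) (u v : Fin n) (cx : EConfig n) (e : EPair n)
    (hce : cx e = true) (hmap : Sym2.map τ e.1 = s(i, i)) :
    blWeight τ q1 q2 m (i, u, cx) * q1 i
      = blWeight τ q1 q2 m (i, v, flipAt cx e) * q2 i := by
  have hprod : (∏ a : Fin K, q2 a ^ onIn τ a cx * q1 a ^ offIn τ a cx) * q1 i
      = (∏ a : Fin K, q2 a ^ onIn τ a (flipAt cx e) * q1 a ^ offIn τ a (flipAt cx e)) * q2 i := by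
    rw [← Finset.mul_prod_erase univ _ (Finset.mem_univ i),
      ← Finset.mul_prod_erase univ
        (fun a => q2 a ^ onIn τ a (flipAt cx e) * q1 a ^ offIn τ a (flipAt cx e))
        (Finset.mem_univ i)]
    have herase : ∏ a ∈ univ.erase i,
        (q2 a ^ onIn τ a (flipAt cx e) * q1 a ^ offIn τ a (flipAt cx e))
        = ∏ a ∈ univ.erase i, (q2 a ^ onIn τ a cx * q1 a ^ offIn τ a cx) := by
      apply Finset.prod_congr rfl
      intro a ha
      have hai : a ≠ i := (Finset.mem_erase.mp ha).1
      have hne : Sym2.map τ e.1 ≠ s(a, a) := by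
        rw [hmap]; intro hcon
        rw [Sym2.eq_iff] at hcon
        rcases hcon with ⟨h1, _⟩ | ⟨h1, _⟩ <;> exact hai h1.symm
      simp only [onIn, offIn, crossOn_flip_ne _ _ _ _ _ hne, crossOff_flip_ne _ _ _ _ _ hne]
    rw [herase]
    have hon : onIn τ i (flipAt cx e) + 1 = onIn τ i cx := crossOn_flip_true τ cx e i i hce hmap
    have hoff : offIn τ i (flipAt cx e) = offIn τ i cx + 1 :=
      crossOff_flip_true τ cx e i i hce hmap
    rw [← hon, hoff, pow_succ, pow_succ]
    ring
  unfold blWeight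
  set C := ∏ pr ∈ Finset.univ.filter (fun pr : Fin K × Fin K => pr.1 < pr.2),
    (1 : ℝ) / ((commCard τ pr.1 * commCard τ pr.2).choose (m pr.1 pr.2) : ℝ) with hC
  dsimp only
  linear_combination ((1 / (K : ℝ)) * (1 / (commCard τ i : ℝ)) * C) * hprod


end DBhelpers2

/-- The block edgelighter walk satisfies detailed balance, on the state
space restricted so that the number of on pairs between any two distinct communities `i ≠ j`
equals `m i j`, with respect to the weight
`w((B_i,u,c)) = (1/K)(1/n_i) ∏_j q_{j;2}^{m_{j,c}} q_{j;1}^{r_{j,c}} ∏_{i<j} 1/C(n_i n_j, m_{ij})`;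
hence the chain is reversible with respect to the probability distribution proportional to `w`. -/
theorem block_edgelighter_detailed_balance (n K : ℕ) (hK : 1 ≤ K)
    (τ : Fin n → Fin K) (q1 q2 : Fin K → ℝ)
    (hq1 : ∀ i, q1 i ∈ Set.Ioo (0 : ℝ) 1) (hq2 : ∀ i, q2 i ∈ Set.Ioo (0 : ℝ) 1)
    (m : Fin K → Fin K → ℕ) (x y : BState n K)
    (hx : τ x.2.1 = x.1) (hy : τ y.2.1 = y.1)
    (hxm : ∀ i j : Fin K, i ≠ j → crossOn τ x.2.2 i j = m i j)
    (hym : ∀ i j : Fin K, i ≠ j → crossOn τ y.2.2 i j = m i j) :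
    blWeight τ q1 q2 m x * blStep τ q1 q2 x y =
      blWeight τ q1 q2 m y * blStep τ q1 q2 y x := by
  obtain ⟨i, u, cx⟩ := x
  obtain ⟨j, v, cy⟩ := y
  replace hx : τ u = i := hx
  replace hy : τ v = j := hy
  replace hxm : ∀ a b : Fin K, a ≠ b → crossOn τ cx a b = m a b := hxm
  replace hym : ∀ a b : Fin K, a ≠ b → crossOn τ cy a b = m a b := hym
  by_cases hij : j = i
  · subst hij
    by_cases hvu : v = u
    · subst hvu
      by_cases hcc : cy = cx
      · subst hcc; rfl
      · have h1 : blStep τ q1 q2 (j, v, cx) (j, v, cy) = 0 := by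
          simp only [blStep]
          rw [if_neg (show ¬ (τ v ≠ j) by simp [hy]), if_pos (by trivial),
            dif_pos (by trivial), if_neg hcc]
        have h2 : blStep τ q1 q2 (j, v, cy) (j, v, cx) = 0 := by
          simp only [blStep]
          rw [if_neg (show ¬ (τ v ≠ j) by simp [hy]), if_pos (by trivial),
            dif_pos (by trivial), if_neg (fun h => hcc h.symm)]
        rw [h1, h2, mul_zero, mul_zero]
    · -- distinct vertices in same community
      set e : EPair n := mkEPair u v (Ne.symm hvu) with he_def
      have hmap : Sym2.map τ e.1 = s(j, j) := by
        simp only [he_def, mkEPair, Sym2.map_pair_eq, hx, hy]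
      have hstep1 : blStep τ q1 q2 (j, u, cx) (j, v, cy) =
          (if cy = cx then (1 - (if cx e then q1 j else q2 j)) / (2 * (commCard τ j : ℝ))
           else if cy = flipAt cx e then
             (if cx e then q1 j else q2 j) / (2 * (commCard τ j : ℝ))
           else 0) := by
        simp only [blStep]
        rw [if_neg (show ¬ (τ v ≠ j) by simp [hy]), if_pos (by trivial), dif_neg hvu]
      have hstep2 : blStep τ q1 q2 (j, v, cy) (j, u, cx) =
          (if cx = cy then (1 - (if cy e then q1 j else q2 j)) / (2 * (commCard τ j : ℝ))
           else if cx = flipAt cy e then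
             (if cy e then q1 j else q2 j) / (2 * (commCard τ j : ℝ))
           else 0) := by
        simp only [blStep]
        rw [if_neg (show ¬ (τ u ≠ j) by simp [hx]), if_pos (by trivial),
          dif_neg (fun h : u = v => hvu h.symm)]
        rw [show ∀ h' : ¬(u = v), mkEPair v u (Ne.symm h') = e from
          fun h' => mkEPair_symm v u (Ne.symm h')]
        exact fun h : u = v => hvu h.symm
      rw [hstep1, hstep2]
      by_cases hcc : cy = cx
      · rw [if_pos hcc, if_pos hcc.symm, hcc]
        rfl
      · have h1 : ¬ cx = flipAt cx e := by
          intro h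
          have h' := congrFun h e
          rw [flipAt_apply_self] at h'
          simp at h'
        by_cases hflip : cy = flipAt cx e
        · rw [if_neg hcc, if_neg (fun h : cx = cy => hcc h.symm), if_pos hflip,
            if_pos (show cx = flipAt cy e by rw [hflip, flipAt_flipAt])]
          have hcye : cy e = !(cx e) := by rw [hflip, flipAt_apply_self]
          by_cases hce : cx e = true
          · have hcyf : cy e = false := by rw [hcye, hce]; rfl
            rw [if_pos hce, if_neg (by rw [hcyf]; simp)]
            have key := weight_flip τ q1 q2 m j u v cx e hce hmap
            rw [← hflip] at key
            linear_combination (1 / (2 * (commCard τ j : ℝ))) * key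
          · have hcxf : cx e = false := by simpa using hce
            have hcyt : cy e = true := by rw [hcye, hcxf]; rfl
            rw [if_neg hce, if_pos hcyt]
            have key := weight_flip τ q1 q2 m j v u cy e hcyt hmap
            rw [show flipAt cy e = cx from by rw [hflip, flipAt_flipAt]] at key
            linear_combination (-(1 / (2 * (commCard τ j : ℝ)))) * key
        · rw [if_neg hcc, if_neg hflip, if_neg (fun h : cx = cy => hcc h.symm),
            if_neg (fun h : cx = flipAt cy e => hflip (by rw [h, flipAt_flipAt]))]
          rw [mul_zero, mul_zero]
  · -- cross community
    have hstep1 : blStep τ q1 q2 (i, u, cx) (j, v, cy) =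
        (if ∃ e1 e2 : EPair n, cx e1 = true ∧ cx e2 = false ∧
            Sym2.map τ e1.1 = s(i, j) ∧ Sym2.map τ e2.1 = s(i, j) ∧
            cy = flipAt (flipAt cx e1) e2
         then 1 / (2 * ((K : ℝ) - 1) * (commCard τ j : ℝ) *
            (crossOn τ cx i j : ℝ) * (crossOff τ cx i j : ℝ))
         else 0) := by
      simp only [blStep]
      rw [if_neg (show ¬ (τ v ≠ j) by simp [hy]), if_neg hij]
    have hstep2 : blStep τ q1 q2 (j, v, cy) (i, u, cx) =
        (if ∃ e1 e2 : EPair n, cy e1 = true ∧ cy e2 = false ∧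
            Sym2.map τ e1.1 = s(j, i) ∧ Sym2.map τ e2.1 = s(j, i) ∧
            cx = flipAt (flipAt cy e1) e2
         then 1 / (2 * ((K : ℝ) - 1) * (commCard τ i : ℝ) *
            (crossOn τ cy j i : ℝ) * (crossOff τ cy j i : ℝ))
         else 0) := by
      simp only [blStep]
      rw [if_neg (show ¬ (τ u ≠ i) by simp [hx]), if_neg (fun h : i = j => hij h.symm)]
    rw [hstep1, hstep2]
    by_cases hex : ∃ e1 e2 : EPair n, cx e1 = true ∧ cx e2 = false ∧
        Sym2.map τ e1.1 = s(i, j) ∧ Sym2.map τ e2.1 = s(i, j) ∧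
        cy = flipAt (flipAt cx e1) e2
    · obtain ⟨e1, e2, h1, h2, hm1, hm2, hcy⟩ := hex
      have hne : e1 ≠ e2 := by
        intro h; rw [h, h2] at h1; exact absurd h1 (by simp)
      have hcye2 : cy e2 = true := by
        rw [hcy, flipAt_apply_self, flipAt_apply_ne _ _ _ hne.symm, h2]; rfl
      have hcye1 : cy e1 = false := by
        rw [hcy, flipAt_apply_ne _ _ _ hne, flipAt_apply_self, h1]; rfl
      have hcx : cx = flipAt (flipAt cy e2) e1 := by
        rw [hcy, flipAt_flipAt, flipAt_flipAt]
      have hex2 : ∃ f1 f2 : EPair n, cy f1 = true ∧ cy f2 = false ∧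
          Sym2.map τ f1.1 = s(j, i) ∧ Sym2.map τ f2.1 = s(j, i) ∧
          cx = flipAt (flipAt cy f1) f2 :=
        ⟨e2, e1, hcye2, hcye1, by rw [hm2]; exact Sym2.eq_swap,
          by rw [hm1]; exact Sym2.eq_swap, hcx⟩
      rw [if_pos ⟨e1, e2, h1, h2, hm1, hm2, hcy⟩, if_pos hex2]
      have hOn : crossOn τ cy j i = crossOn τ cx i j := by
        rw [crossOn_symm, hym i j (fun h : i = j => hij h.symm),
          hxm i j (fun h : i = j => hij h.symm)]
      have hOff : crossOff τ cy j i = crossOff τ cx i j := by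
        have t1 := crossOn_add_crossOff τ cy j i
        have t2 := crossOn_add_crossOff τ cx i j
        rw [show s(j, i) = s(i, j) from Sym2.eq_swap] at t1
        omega
      have hW : (∏ a : Fin K, q2 a ^ onIn τ a cy * q1 a ^ offIn τ a cy)
          = ∏ a : Fin K, q2 a ^ onIn τ a cx * q1 a ^ offIn τ a cx := by
        apply Finset.prod_congr rfl
        intro a _
        have hgen : ∀ f : EPair n, Sym2.map τ f.1 = s(i, j) → Sym2.map τ f.1 ≠ s(a, a) := by
          intro f hf; rw [hf]; intro hcon
          rw [Sym2.eq_iff] at hcon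
          rcases hcon with ⟨ha1, ha2⟩ | ⟨ha1, ha2⟩ <;> exact hij (ha2.trans ha1.symm)
        simp only [onIn, offIn, hcy,
          crossOn_flip_ne _ _ _ _ _ (hgen e2 hm2), crossOn_flip_ne _ _ _ _ _ (hgen e1 hm1),
          crossOff_flip_ne _ _ _ _ _ (hgen e2 hm2), crossOff_flip_ne _ _ _ _ _ (hgen e1 hm1)]
      unfold blWeight
      rw [hW, hOn, hOff]
      simp only [one_div, mul_inv]
      ring
    · have hex2 : ¬ ∃ f1 f2 : EPair n, cy f1 = true ∧ cy f2 = false ∧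
          Sym2.map τ f1.1 = s(j, i) ∧ Sym2.map τ f2.1 = s(j, i) ∧
          cx = flipAt (flipAt cy f1) f2 := by
        rintro ⟨f1, f2, h1, h2, hm1, hm2, hcx⟩
        apply hex
        have hne : f1 ≠ f2 := by
          intro h; rw [h, h2] at h1; exact absurd h1 (by simp)
        refine ⟨f2, f1, ?_, ?_, by rw [hm2]; exact Sym2.eq_swap, by rw [hm1]; exact Sym2.eq_swap, ?_⟩
        · rw [hcx, flipAt_apply_self, flipAt_apply_ne _ _ _ hne.symm, h2]; rfl
        · rw [hcx, flipAt_apply_ne _ _ _ hne, flipAt_apply_self, h1]; rfl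
        · rw [hcx, flipAt_flipAt, flipAt_flipAt]
      rw [if_neg hex, if_neg hex2, mul_zero, mul_zero]
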